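/- arXiv:2009.02578 — 7 statements merged into one kernel-verified Lean document; each statement's English description precedes it below -/
import Mathlib

section
/- For integers 1 ≤ b < c, 1 ≤ k ≤ c−b, and 1 ≤ p ≤ c−k and 0 ≤ q ≤ min(b,p) with p−q ≤ c−b−k, the identity C(c−b−p+q, k)·C(c−p, b−q)·C(c−k, b) / (C(c−k−p, b−q)·C(c, b)) = C(c−k, b)·C(c−p, k)/C(c, b) = C(c−b, k)·C(c−k, p)/C(c, p) holds (all binomial coefficients interpreted as usual, with the stated constraints ensuring non-vanishing denominators). -/
lemma tri {n a k : ℕ} (h : a + k ≤ n) :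
    n.choose a * (n - a).choose k = n.choose k * (n - k).choose a := by
  have h1 := Nat.choose_mul (n := n) (Nat.le_add_right a k)
  have h2 := Nat.choose_mul (n := n) (Nat.le_add_left k a)
  rw [Nat.add_sub_cancel_left] at h1
  rw [Nat.add_sub_cancel] at h2
  have hs : (a + k).choose a = (a + k).choose k := by
    rw [← Nat.choose_symm (Nat.le_add_left k a), Nat.add_sub_cancel]
  rw [← h1, ← h2, hs]

theorem stmt0 (b c k p q : ℕ)
    (hb : 1 ≤ b) (hbc : b < c)
    (hk : 1 ≤ k) (hkc : k ≤ c - b)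
    (hp : 1 ≤ p) (hpc : p ≤ c - k)
    (hqb : q ≤ b) (hqp : q ≤ p)
    (hpq : b + k + p ≤ c + q) :
    (((c + q - b - p).choose k * (c - p).choose (b - q) * (c - k).choose b : ℕ) : ℚ) /
        (((c - k - p).choose (b - q) * c.choose b : ℕ) : ℚ)
      = (((c - k).choose b * (c - p).choose k : ℕ) : ℚ) / ((c.choose b : ℕ) : ℚ) ∧
    (((c - k).choose b * (c - p).choose k : ℕ) : ℚ) / ((c.choose b : ℕ) : ℚ)
      = (((c - b).choose k * (c - k).choose p : ℕ) : ℚ) / ((c.choose p : ℕ) : ℚ) := by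
  have hA : (b - q) + k ≤ c - p := by omega
  have e1 : c + q - b - p = (c - p) - (b - q) := by omega
  have e2 : c - k - p = (c - p) - k := by omega
  have h1 : (c + q - b - p).choose k * (c - p).choose (b - q)
      = (c - k - p).choose (b - q) * (c - p).choose k := by
    rw [e1, e2]
    have h := tri hA
    rw [Nat.mul_comm] at h
    rw [h, Nat.mul_comm]
  have t1 : c.choose k * (c - k).choose b = c.choose b * (c - b).choose k :=
    tri (show k + b ≤ c by omega)
  have t2 : c.choose p * (c - p).choose k = c.choose k * (c - k).choose p :=
    tri (show p + k ≤ c by omega)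
  have t1q : (c.choose k * (c - k).choose b : ℚ) = (c.choose b * (c - b).choose k : ℚ) := by
    exact_mod_cast t1
  have t2q : (c.choose p * (c - p).choose k : ℚ) = (c.choose k * (c - k).choose p : ℚ) := by
    exact_mod_cast t2
  have h1q : ((c + q - b - p).choose k * (c - p).choose (b - q) : ℚ)
      = ((c - k - p).choose (b - q) * (c - p).choose k : ℚ) := by exact_mod_cast h1
  have h2q : ((c - k).choose b * (c - p).choose k * c.choose p : ℚ)
      = ((c - b).choose k * (c - k).choose p * c.choose b : ℚ) := by
    linear_combination ((c - k).choose b : ℚ) * t2q + ((c - k).choose p : ℚ) * t1q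
  have hD : (0:ℚ) < ((c - k - p).choose (b - q) : ℚ) := by
    exact_mod_cast Nat.choose_pos (show b - q ≤ c - k - p by omega)
  have hE : (0:ℚ) < (c.choose b : ℚ) := by
    exact_mod_cast Nat.choose_pos (show b ≤ c by omega)
  have hP : (0:ℚ) < (c.choose p : ℚ) := by
    exact_mod_cast Nat.choose_pos (show p ≤ c by omega)
  constructor
  · push_cast
    rw [div_eq_div_iff (by positivity) hE.ne']
    linear_combination ((c - k).choose b * c.choose b : ℚ) * h1q
  · push_cast
    rw [div_eq_div_iff hE.ne' hP.ne']
    linear_combination h2q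
end

section
/- Let C = {1,…,c} and B = {1,…,b} with 1 ≤ b < c, and let 1 ≤ k ≤ c−b−1 and 1 ≤ p ≤ c−k. For a p-element subset J ⊆ C, let q'(J) = |J ∩ B|. If J is chosen uniformly at random among all p-element subsets of C, then the expected number of k-element subsets K ⊆ C∖B with K ∩ J = ∅, namely E[C(c−b−p+q'(J), k)], equals C(c−b, k)·C(c−k, p)/C(c, p). -/
open Finset

lemma key_count (b c k p : ℕ) (hbc : b < c) (hpc : p ≤ c - k) (hkcb : k ≤ c - b) :
    ∑ J ∈ (Finset.Icc 1 c).powersetCard p,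
      (c - b + (J ∩ Finset.Icc 1 b).card - p).choose k
      = (c - b).choose k * (c - k).choose p := by
  set C := Finset.Icc 1 c with hC
  set Bf := Finset.Icc 1 b with hBf
  set T := Finset.Icc (b + 1) c with hT
  have hcardC : C.card = c := by simp [hC]
  have hcardT : T.card = c - b := by rw [hT, Nat.card_Icc]; omega
  have hTC : T ⊆ C := by
    intro x hx
    simp only [hT, hC, Finset.mem_Icc] at *
    omega
  have step1 : ∀ J ∈ C.powersetCard p,
      (c - b + (J ∩ Bf).card - p).choose k = ((T \ J).powersetCard k).card := by
    intro J hJ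
    rw [Finset.mem_powersetCard] at hJ
    obtain ⟨hJC, hJcard⟩ := hJ
    rw [Finset.card_powersetCard]
    have h2 : T ∩ J = J \ Bf := by
      ext x
      simp only [hT, hBf, Finset.mem_inter, Finset.mem_sdiff, Finset.mem_Icc]
      constructor
      · rintro ⟨hx, hxJ⟩; exact ⟨hxJ, by omega⟩
      · rintro ⟨hxJ, hx⟩
        have := hJC hxJ
        simp only [hC, Finset.mem_Icc] at this
        exact ⟨⟨by omega, this.2⟩, hxJ⟩
    have h1 : (T \ J).card + (T ∩ J).card = T.card := Finset.card_sdiff_add_card_inter T J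
    rw [h2, hcardT] at h1
    have h3 : (J ∩ Bf).card + (J \ Bf).card = J.card := Finset.card_inter_add_card_sdiff J Bf
    rw [hJcard] at h3
    congr 1
    omega
  rw [Finset.sum_congr rfl step1]
  have step2 : ∀ J, (T \ J).powersetCard k
      = (T.powersetCard k).filter (fun K => Disjoint K J) := by
    intro J
    ext K
    simp only [Finset.mem_powersetCard, Finset.mem_filter, Finset.subset_sdiff]
    tauto
  simp_rw [step2, Finset.card_filter]
  rw [Finset.sum_comm]
  have step3 : ∀ K ∈ T.powersetCard k,
      (∑ J ∈ C.powersetCard p, if Disjoint K J then 1 else 0) = (c - k).choose p := by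
    intro K hK
    rw [Finset.mem_powersetCard] at hK
    obtain ⟨hKT, hKcard⟩ := hK
    rw [← Finset.card_filter]
    have : (C.powersetCard p).filter (fun J => Disjoint K J)
        = (C \ K).powersetCard p := by
      ext J
      simp only [Finset.mem_powersetCard, Finset.mem_filter, Finset.subset_sdiff]
      constructor
      · rintro ⟨⟨h1, h2⟩, h3⟩; exact ⟨⟨h1, h3.symm⟩, h2⟩
      · rintro ⟨⟨h1, h3⟩, h2⟩; exact ⟨⟨h1, h2⟩, h3.symm⟩
    rw [this, Finset.card_powersetCard, Finset.card_sdiff_of_subset (hKT.trans hTC), hcardC, hKcard]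
  rw [Finset.sum_congr rfl step3, Finset.sum_const, Finset.card_powersetCard, hcardT,
    smul_eq_mul]

theorem stmt1 (b c k p : ℕ)
    (hb : 1 ≤ b) (hbc : b < c)
    (hk : 1 ≤ k) (hkc : k ≤ c - b - 1)
    (hp : 1 ≤ p) (hpc : p ≤ c - k) :
    (∑ J ∈ (Finset.Icc 1 c).powersetCard p,
        (((c - b + (J ∩ Finset.Icc 1 b).card - p).choose k : ℕ) : ℚ)) /
        ((c.choose p : ℕ) : ℚ)
      = (((c - b).choose k * (c - k).choose p : ℕ) : ℚ) / ((c.choose p : ℕ) : ℚ) := by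
  congr 1
  rw [← Nat.cast_sum]
  exact_mod_cast key_count b c k p hbc hpc (by omega)
end

section
/- For a contributing cusum subscript (h₁,…,h_p) with ordered rearrangement h'₁ ≤ … ≤ h'_p satisfying h'_α ≥ α, the number of p-tuples (j₁,…,j_p) with pairwise distinct entries and 1 ≤ j_α ≤ h_α for all α equals h'₁·(h'₂−1)·…·(h'_p−p+1). -/
open Finset Function

private lemma snoc_inj {α : Type*} {p : ℕ} {f : Fin p → α} {x : α}
    (hf : Function.Injective f) (hx : ∀ i, f i ≠ x) :
    Function.Injective (Fin.snoc f x) := by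
  intro a b hab
  induction a using Fin.lastCases with
  | last =>
    induction b using Fin.lastCases with
    | last => rfl
    | cast i =>
      rw [Fin.snoc_last, Fin.snoc_castSucc] at hab
      exact absurd hab.symm (hx i)
  | cast i =>
    induction b using Fin.lastCases with
    | last =>
      rw [Fin.snoc_last, Fin.snoc_castSucc] at hab
      exact absurd hab (hx i)
    | cast i' =>
      rw [Fin.snoc_castSucc, Fin.snoc_castSucc] at hab
      exact congrArg Fin.castSucc (hf hab)

private lemma aux (c : ℕ) : ∀ (p : ℕ) (g : Fin p → Fin c), Monotone g →
    (Finset.univ.filter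
        (fun j : Fin p → Fin c => Function.Injective j ∧ ∀ α, j α ≤ g α)).card
      = ∏ α : Fin p, ((g α : ℕ) + 1 - (α : ℕ)) := by
  intro p
  induction p with
  | zero =>
    intro g _
    rw [Finset.filter_true_of_mem (fun j _ => ⟨fun a => a.elim0, fun a => a.elim0⟩)]
    simp
  | succ p ih =>
    intro g hmono
    set gl := g (Fin.last p) with hgl
    set S' : Finset (Fin p → Fin c) := Finset.univ.filter (fun j : Fin p → Fin c =>
        Function.Injective j ∧ ∀ α, j α ≤ g α.castSucc) with hS'
    have key : (Finset.univ.filter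
        (fun j : Fin (p+1) → Fin c => Function.Injective j ∧ ∀ α, j α ≤ g α)).card
        = (S'.sigma (fun j' => (Finset.Iic gl) \ (Finset.univ.image j'))).card := by
      refine Finset.card_bij'
        (fun j _ => (⟨fun i => j i.castSucc, j (Fin.last p)⟩ :
          Σ _ : Fin p → Fin c, Fin c))
        (fun x _ => Fin.snoc x.1 x.2) ?_ ?_ ?_ ?_
      · intro j hj
        obtain ⟨hinj, hle⟩ := (Finset.mem_filter.mp hj).2
        refine Finset.mem_sigma.mpr ⟨Finset.mem_filter.mpr ⟨Finset.mem_univ _,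
          hinj.comp (Fin.castSucc_injective p), fun α => hle α.castSucc⟩, ?_⟩
        refine Finset.mem_sdiff.mpr ⟨Finset.mem_Iic.mpr (hle _), ?_⟩
        intro hmem
        obtain ⟨i, _, hi⟩ := Finset.mem_image.mp hmem
        exact absurd (hinj hi) (Fin.ne_last_of_lt (Fin.castSucc_lt_last i))
      · rintro ⟨j', x⟩ hx
        obtain ⟨hj', hx'⟩ := Finset.mem_sigma.mp hx
        obtain ⟨hinj, hle⟩ := (Finset.mem_filter.mp hj').2
        obtain ⟨hxle, hximg⟩ := Finset.mem_sdiff.mp hx'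
        refine Finset.mem_filter.mpr ⟨Finset.mem_univ _, ?_, ?_⟩
        · exact snoc_inj hinj (fun i hi =>
            hximg (Finset.mem_image.mpr ⟨i, Finset.mem_univ _, hi⟩))
        · intro α
          induction α using Fin.lastCases with
          | last => simp only [Fin.snoc_last]; exact Finset.mem_Iic.mp hxle
          | cast i => simp only [Fin.snoc_castSucc]; exact hle i
      · intro j _
        exact Fin.snoc_init_self j
      · rintro ⟨j', x⟩ _
        simp
    rw [key, Finset.card_sigma]
    have hT : ∀ j' ∈ S', ((Finset.Iic gl) \ (Finset.univ.image j')).card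
        = (gl : ℕ) + 1 - p := by
      intro j' hj'
      obtain ⟨hinj, hle⟩ := (Finset.mem_filter.mp hj').2
      rw [Finset.card_sdiff_of_subset, Fin.card_Iic, Finset.card_image_of_injective _ hinj,
        Finset.card_univ, Fintype.card_fin]
      intro x hx
      obtain ⟨i, _, rfl⟩ := Finset.mem_image.mp hx
      exact Finset.mem_Iic.mpr ((hle i).trans (hmono (Fin.le_last i.castSucc)))
    rw [Finset.sum_congr rfl hT, Finset.sum_const, smul_eq_mul,
      ih (fun i => g i.castSucc) (fun a b hab => hmono (Fin.castSucc_le_castSucc_iff.mpr hab)),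
      Fin.prod_univ_castSucc]
    simp [hgl]

theorem stmt4 (p c : ℕ) (hp : 0 < p) (hpc : p ≤ c) (h : Fin p → Fin c)
    (hcontrib : ∀ α : Fin p, (α : ℕ) ≤ ((h (Tuple.sort h α)) : ℕ)) :
    (Finset.univ.filter
        (fun j : Fin p → Fin c => Function.Injective j ∧ ∀ α, j α ≤ h α)).card
      = ∏ α : Fin p, (((h (Tuple.sort h α)) : ℕ) + 1 - (α : ℕ)) := by
  have hmono : Monotone (h ∘ Tuple.sort h) := Tuple.monotone_sort h
  have hb : (Finset.univ.filter
      (fun j : Fin p → Fin c => Function.Injective j ∧ ∀ α, j α ≤ h α)).card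
      = (Finset.univ.filter (fun j : Fin p → Fin c =>
          Function.Injective j ∧ ∀ α, j α ≤ h (Tuple.sort h α))).card := by
    apply Finset.card_bij' (fun j _ => j ∘ Tuple.sort h)
      (fun j _ => j ∘ (Tuple.sort h).symm)
    · intro j hj
      obtain ⟨hinj, hle⟩ := (Finset.mem_filter.mp hj).2
      exact Finset.mem_filter.mpr ⟨Finset.mem_univ _,
        hinj.comp (Tuple.sort h).injective, fun α => hle _⟩
    · intro j hj
      obtain ⟨hinj, hle⟩ := (Finset.mem_filter.mp hj).2
      refine Finset.mem_filter.mpr ⟨Finset.mem_univ _,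
        hinj.comp (Tuple.sort h).symm.injective, fun α => ?_⟩
      have := hle ((Tuple.sort h).symm α)
      simpa using this
    · intro j _; funext i; simp
    · intro j _; funext i; simp
  rw [hb]
  exact aux c p _ hmono
end

section
/- Fix 1 ≤ b < c, 1 ≤ k ≤ c−b−1, 1 ≤ p ≤ c−k. When applied to the averaged hypergeometric case: if q_p has the hypergeometric distribution of the number of successes in p draws without replacement from a population of c items containing b successes, then E[C(c−b−p+q_p, k)] = C(c−b, k)·C(c−k, p)/C(c, p). -/
lemma choose_sub_choose (m j k : ℕ) :
    m.choose j * (m - j).choose k = m.choose k * (m - k).choose j := by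
  by_cases h : j + k ≤ m
  · have h1 : m.choose (j + k) * (j + k).choose j = m.choose j * (m - j).choose k := by
      have := Nat.choose_mul (n := m) (k := j + k) (s := j) (Nat.le_add_right _ _)
      simpa using this
    have h2 : m.choose (j + k) * (j + k).choose k = m.choose k * (m - k).choose j := by
      have := Nat.choose_mul (n := m) (k := j + k) (s := k) (Nat.le_add_left _ _)
      simpa [Nat.add_sub_cancel] using this
    rw [← h1, ← h2, Nat.choose_symm_add]
  · push_neg at h
    by_cases hj : j ≤ m
    · by_cases hk : k ≤ m
      · rw [Nat.choose_eq_zero_of_lt (by omega : m - j < k),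
          Nat.choose_eq_zero_of_lt (by omega : m - k < j)]
        ring
      · rw [Nat.choose_eq_zero_of_lt (by omega : m < k),
          Nat.choose_eq_zero_of_lt (by omega : m - j < k)]
        ring
    · rw [Nat.choose_eq_zero_of_lt (by omega : m < j),
        Nat.choose_eq_zero_of_lt (by omega : m - k < j)]
      ring

theorem stmt8 (b c k p : ℕ)
    (hb : 1 ≤ b) (hbc : b < c) (hk : 1 ≤ k) (hkc : k ≤ c - b - 1)
    (hp : 1 ≤ p) (hpc : p ≤ c - k) :
    ∑ q ∈ Finset.range (p + 1),
        (((b.choose q * (c - b).choose (p - q) : ℕ) : ℚ) / ((c.choose p : ℕ) : ℚ)) *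
          (((c - b + q - p).choose k : ℕ) : ℚ)
      = (((c - b).choose k * (c - k).choose p : ℕ) : ℚ) / ((c.choose p : ℕ) : ℚ) := by
  have key : ∑ q ∈ Finset.range (p + 1),
      b.choose q * (c - b).choose (p - q) * (c - b + q - p).choose k
      = (c - b).choose k * (c - k).choose p := by
    have hstep : ∀ q ∈ Finset.range (p + 1),
        b.choose q * (c - b).choose (p - q) * (c - b + q - p).choose k
          = (c - b).choose k * (b.choose q * ((c - b - k).choose (p - q))) := by
      intro q hq
      rw [Finset.mem_range] at hq
      have harg : c - b + q - p = c - b - (p - q) := by omega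
      rw [harg, Nat.mul_assoc, choose_sub_choose]
      ring
    rw [Finset.sum_congr rfl hstep, ← Finset.mul_sum]
    congr 1
    have hv := Nat.add_choose_eq b (c - b - k) p
    rw [Finset.Nat.sum_antidiagonal_eq_sum_range_succ_mk] at hv
    have : b + (c - b - k) = c - k := by omega
    rw [this] at hv
    exact hv.symm
  have hc0 : ((c.choose p : ℕ) : ℚ) ≠ 0 := by
    have : 0 < c.choose p := Nat.choose_pos (by omega)
    exact_mod_cast this.ne'
  calc ∑ q ∈ Finset.range (p + 1),
        (((b.choose q * (c - b).choose (p - q) : ℕ) : ℚ) / ((c.choose p : ℕ) : ℚ)) *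
          (((c - b + q - p).choose k : ℕ) : ℚ)
      = (∑ q ∈ Finset.range (p + 1),
          ((b.choose q * (c - b).choose (p - q) * (c - b + q - p).choose k : ℕ) : ℚ))
          / ((c.choose p : ℕ) : ℚ) := by
        rw [Finset.sum_div]
        refine Finset.sum_congr rfl fun q _ => ?_
        push_cast
        ring
    _ = _ := by rw [← Nat.cast_sum, key]
end

section
/- Let w = (ω,…,ω,1,…,1) with the first g components equal to ω ≥ 1 (a simplex boundary vector), with g = b ≥ 2, and consider the double-index average cross-product ratio R^{(q,g)}_{J•}(ω) with q=1, p=2, J = {1, j₂}. Then the limit as ω → ∞ equals (1−k/c)(1−k/(c−1)) when 2 ≤ j₂ ≤ g, and equals (1−k/c)(1−k/(c−1))/(1−k/(c−g)) when g+1 ≤ j₂ ≤ c−1. -/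
/-- `esym S w m` is the `m`-th elementary symmetric polynomial of the weights
`w i`, `i ∈ S`. -/
noncomputable def esym (S : Finset ℕ) (w : ℕ → ℝ) (m : ℕ) : ℝ :=
  ∑ T ∈ S.powersetCard m, ∏ i ∈ T, w i

/-- The simplex boundary vector `W^{(g)}(ω)`: first `g` coordinates equal to `ω`,
the rest equal to `1` (indices `1,…,c`). -/
noncomputable def simplexW (g : ℕ) (ω : ℝ) : ℕ → ℝ := fun i => if i ≤ g then ω else 1

/-- The cross-product ratio `R_{JK}` for `p = 2`, `q = 1`, `J = {1, j₂}`. -/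
noncomputable def crossRatio (b c k j₂ : ℕ) (K : Finset ℕ) (w : ℕ → ℝ) : ℝ :=
  (esym (Finset.Icc 1 c \ insert 1 (insert j₂ K)) w (b - 1) /
      ((c - k - 2).choose (b - 1) : ℝ)) *
    (esym (Finset.Icc 1 c) w b / (c.choose b : ℝ)) /
  ((esym (Finset.Icc 1 c \ {1, j₂}) w (b - 1) / ((c - 2).choose (b - 1) : ℝ)) *
    (esym (Finset.Icc 1 c \ K) w b / ((c - k).choose b : ℝ)))

/-- The average cross-product ratio `R_{J•}`, averaged over `k`-subsets
`K ⊆ C∖B` disjoint from `J = {1, j₂}`. -/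
noncomputable def avgCrossRatio (b c k j₂ : ℕ) (w : ℕ → ℝ) : ℝ :=
  (∑ K ∈ ((Finset.Icc (b + 1) c).erase j₂).powersetCard k, crossRatio b c k j₂ K w) /
    ((((Finset.Icc (b + 1) c).erase j₂).powersetCard k).card : ℝ)

open Finset Filter

lemma esym_zero (S : Finset ℕ) (w : ℕ → ℝ) : esym S w 0 = 1 := by
  simp [esym]

lemma esym_insert {a : ℕ} {S : Finset ℕ} (h : a ∉ S) (w : ℕ → ℝ) (m : ℕ) :
    esym (insert a S) w (m+1) = esym S w (m+1) + w a * esym S w m := by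
  unfold esym
  rw [Finset.powersetCard_succ_insert h, Finset.sum_union, Finset.sum_image]
  · congr 1
    rw [Finset.mul_sum]
    refine Finset.sum_congr rfl fun T hT => ?_
    have haT : a ∉ T := fun hx => h ((Finset.mem_powersetCard.1 hT).1 hx)
    rw [Finset.prod_insert haT]
  · intro T hT U hU hTU
    have haT : a ∉ T := fun hx => h ((Finset.mem_powersetCard.1 hT).1 hx)
    have haU : a ∉ U := fun hx => h ((Finset.mem_powersetCard.1 hU).1 hx)
    have := congrArg (fun s => Finset.erase s a) hTU
    simpa [Finset.erase_insert haT, Finset.erase_insert haU] using this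
  · rw [Finset.disjoint_left]
    intro T hT hT'
    obtain ⟨U, hU, hUe⟩ := Finset.mem_image.1 hT'
    have haT : a ∈ T := hUe ▸ Finset.mem_insert_self a U
    exact h ((Finset.mem_powersetCard.1 hT).1 haT)
    
lemma esym_ones {O : Finset ℕ} {w : ℕ → ℝ} (h : ∀ i ∈ O, w i = 1) (m : ℕ) :
    esym O w m = (O.card.choose m : ℝ) := by
  unfold esym
  rw [← Finset.card_powersetCard m O, Finset.card_eq_sum_ones, Nat.cast_sum]
  refine Finset.sum_congr rfl fun T hT => ?_
  have h' : ∀ i ∈ T, w i = 1 := fun i hi => h i ((Finset.mem_powersetCard.1 hT).1 hi)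
  rw [Finset.prod_congr rfl h', Finset.prod_const_one]
  simp

lemma esym_formula (O : Finset ℕ) (w : ℕ → ℝ) (ω : ℝ) (hO : ∀ i ∈ O, w i = 1)
    (A : Finset ℕ) : Disjoint A O → (∀ i ∈ A, w i = ω) → ∀ m : ℕ,
      esym (A ∪ O) w m = ∑ j ∈ Finset.range (m+1),
        (A.card.choose j : ℝ) * (O.card.choose (m - j) : ℝ) * ω ^ j := by
  induction A using Finset.induction_on with
  | empty =>
    intro _ _ m
    rw [Finset.empty_union, esym_ones hO, Finset.sum_eq_single 0]
    · simp
    · intro j hj hj0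
      obtain ⟨n, rfl⟩ : ∃ n, j = n + 1 := ⟨j - 1, by omega⟩
      simp
    · intro h; exact absurd (Finset.mem_range.2 (by omega)) h
  | @insert a A' ha ih =>
    intro hd hA m
    have hd' : Disjoint A' O := hd.mono_left (Finset.subset_insert a A')
    have hA' : ∀ i ∈ A', w i = ω := fun i hi => hA i (Finset.mem_insert_of_mem hi)
    have hwa : w a = ω := hA a (Finset.mem_insert_self a A')
    have haO : a ∉ A' ∪ O := by
      simp only [Finset.mem_union, not_or]
      exact ⟨ha, Finset.disjoint_left.1 hd (Finset.mem_insert_self a A')⟩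
    have hcard : (insert a A').card = A'.card + 1 := Finset.card_insert_of_notMem ha
    rw [Finset.insert_union]
    cases m with
    | zero => rw [esym_zero]; simp
    | succ m =>
      rw [esym_insert haO, ih hd' hA' (m+1), ih hd' hA' m, hwa, hcard]
      rw [Finset.mul_sum]
      rw [Finset.sum_range_succ' (fun j => ((A'.card+1).choose j : ℝ) * (O.card.choose (m+1-j)) * ω ^ j) (m+1)]
      rw [Finset.sum_range_succ' (fun j => ((A'.card).choose j : ℝ) * (O.card.choose (m+1-j)) * ω ^ j) (m+1)]
      rw [add_comm (∑ i ∈ Finset.range (m+1), _) _, add_comm (∑ i ∈ Finset.range (m+1), _) _,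
        add_assoc]
      congr 1
      · simp
      rw [← Finset.sum_add_distrib]
      refine Finset.sum_congr rfl fun j hj => ?_
      have hch : ((A'.card+1).choose (j+1) : ℝ) = (A'.card.choose (j+1) : ℝ) + (A'.card.choose j : ℝ) := by
        push_cast [Nat.choose_succ_succ]; ring
      have hsub : m + 1 - (j + 1) = m - j := by omega
      rw [hch, hsub]
      ring

lemma tendsto_poly_div (n d : ℕ) (f : ℕ → ℝ) (hdn : d ≤ n) (hf : ∀ j, d < j → f j = 0) :
    Tendsto (fun ω : ℝ => (∑ j ∈ Finset.range (n+1), f j * ω ^ j) / ω ^ d) atTop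
      (nhds (f d)) := by
  have h1 : Tendsto (fun ω : ℝ => ∑ j ∈ Finset.range (n+1), f j * (ω ^ j / ω ^ d)) atTop
      (nhds (∑ j ∈ Finset.range (n+1), if j = d then f d else 0)) := by
    refine tendsto_finset_sum _ fun j _ => ?_
    rcases lt_trichotomy j d with h | heq | h
    · rw [if_neg h.ne]
      have h2 : Tendsto (fun ω : ℝ => ω ^ j / ω ^ d) atTop (nhds 0) := by
        have h3 : Tendsto (fun ω : ℝ => ((ω ^ (d - j) : ℝ))⁻¹) atTop (nhds 0) :=
          (tendsto_pow_atTop (by omega : d - j ≠ 0)).inv_tendsto_atTop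
        refine h3.congr' ?_
        filter_upwards [eventually_gt_atTop (0:ℝ)] with ω hω
        rw [eq_div_iff (by positivity), inv_mul_eq_div, div_eq_iff (by positivity), ← pow_add]
        congr 1; omega
      simpa using h2.const_mul (f j)
    · subst heq
      rw [if_pos rfl]
      have h2 : Tendsto (fun ω : ℝ => ω ^ j / ω ^ j) atTop (nhds 1) := by
        refine tendsto_const_nhds.congr' ?_
        filter_upwards [eventually_gt_atTop (0:ℝ)] with ω hω
        rw [div_self (by positivity)]
      simpa using h2.const_mul (f j)
    · rw [if_neg h.ne', hf j h]
      simpa using tendsto_const_nhds (α := ℝ) (f := atTop) (a := (0:ℝ))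
  have h2 : (∑ j ∈ Finset.range (n+1), if j = d then f d else 0) = f d := by
    rw [Finset.sum_ite_eq' (Finset.range (n+1)) d (fun _ => f d)]
    rw [if_pos (Finset.mem_range.2 (by omega))]
  rw [h2] at h1
  refine h1.congr' ?_
  filter_upwards [eventually_gt_atTop (0:ℝ)] with ω hω
  rw [Finset.sum_div]
  exact Finset.sum_congr rfl fun j _ => (mul_div_assoc _ _ _).symm

lemma div_div_same (X Y t : ℝ) (ht : t ≠ 0) : X / t / (Y / t) = X / Y := by
  rcases eq_or_ne Y 0 with rfl | hY
  · simp
  · field_simp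

lemma tendsto_esym_div (b m a s : ℕ) (A O : Finset ℕ) (hd : Disjoint A O)
    (hA : ∀ i ∈ A, i ≤ b) (hO : ∀ i ∈ O, b < i) (hca : A.card = a) (hcs : O.card = s)
    (hm : a ≤ m) :
    Tendsto (fun ω : ℝ => esym (A ∪ O) (simplexW b ω) m / ω ^ a) atTop
      (nhds (s.choose (m - a) : ℝ)) := by
  subst hca hcs
  have key := tendsto_poly_div m A.card
      (fun j => (A.card.choose j : ℝ) * (O.card.choose (m - j) : ℝ)) hm
      (fun j hj => by simp [Nat.choose_eq_zero_of_lt hj])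
  simp only [Nat.choose_self, Nat.cast_one, one_mul] at key
  refine Filter.Tendsto.congr (fun ω => ?_) key
  congr 1
  rw [esym_formula O (simplexW b ω) ω
    (fun i hi => by simp only [simplexW]; rw [if_neg (by have := hO i hi; omega)]) A hd
    (fun i hi => by simp only [simplexW]; rw [if_pos (hA i hi)]) m]

lemma tendsto_ratio_combo {F1 F2 F3 F4 : ℝ → ℝ} {C1 C2 C3 C4 L1 L2 L3 L4 : ℝ} {d1 d2 : ℕ}
    (h1 : Tendsto (fun ω : ℝ => F1 ω / ω ^ d1) atTop (nhds L1))
    (h2 : Tendsto (fun ω : ℝ => F2 ω / ω ^ d2) atTop (nhds L2))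
    (h3 : Tendsto (fun ω : ℝ => F3 ω / ω ^ d1) atTop (nhds L3))
    (h4 : Tendsto (fun ω : ℝ => F4 ω / ω ^ d2) atTop (nhds L4))
    (hden : L3 / C3 * (L4 / C4) ≠ 0) :
    Tendsto (fun ω : ℝ => F1 ω / C1 * (F2 ω / C2) / (F3 ω / C3 * (F4 ω / C4))) atTop
      (nhds (L1 / C1 * (L2 / C2) / (L3 / C3 * (L4 / C4)))) := by
  have hnum := (h1.div_const C1).mul (h2.div_const C2)
  have hden' := (h3.div_const C3).mul (h4.div_const C4)
  have hmain := hnum.div hden' hden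
  refine hmain.congr' ?_
  filter_upwards [eventually_gt_atTop (0:ℝ)] with ω hω
  have ht : (ω:ℝ) ^ d1 * ω ^ d2 ≠ 0 := by positivity
  have e1 : F1 ω / ω^d1 / C1 * (F2 ω / ω^d2 / C2)
      = (F1 ω / C1 * (F2 ω / C2)) / (ω^d1 * ω^d2) := by ring
  have e3 : F3 ω / ω^d1 / C3 * (F4 ω / ω^d2 / C4)
      = (F3 ω / C3 * (F4 ω / C4)) / (ω^d1 * ω^d2) := by ring
  simp only [Pi.div_apply]
  rw [e1, e3, div_div_same _ _ _ ht]

section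
open Nat
lemma core_identity (b c k : ℕ) (hb : 2 ≤ b) (hk : 1 ≤ k) (hbkc : b + k + 2 ≤ c) :
    ((c:ℝ) - b - k) * c * ((c:ℝ) - 1) * ((c-2).choose (b-1) : ℝ) * ((c-k).choose b : ℝ)
    = ((c:ℝ) - b) * ((c:ℝ) - k) * ((c:ℝ) - k - 1) * ((c-k-2).choose (b-1) : ℝ)
        * (c.choose b : ℝ) := by
  obtain ⟨s, rfl⟩ : ∃ s, b = s + 2 := ⟨b - 2, by omega⟩
  obtain ⟨t, rfl⟩ : ∃ t, c = s + k + t + 4 := ⟨c - (s + k + 4), by omega⟩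
  have e1 : s + k + t + 4 - 2 = s + k + t + 2 := by omega
  have e2 : s + 2 - 1 = s + 1 := by omega
  have e3 : s + k + t + 4 - k = s + t + 4 := by omega
  have e4 : s + k + t + 4 - k - 2 = s + t + 2 := by omega
  rw [e1, e2, e4, e3]
  rw [Nat.cast_choose ℝ (by omega : s + 1 ≤ s + k + t + 2),
      Nat.cast_choose ℝ (by omega : s + 2 ≤ s + t + 4),
      Nat.cast_choose ℝ (by omega : s + 1 ≤ s + t + 2),
      Nat.cast_choose ℝ (by omega : s + 2 ≤ s + k + t + 4)]
  have e5 : s + k + t + 2 - (s + 1) = k + t + 1 := by omega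
  have e6 : s + t + 4 - (s + 2) = t + 2 := by omega
  have e7 : s + t + 2 - (s + 1) = t + 1 := by omega
  have e8 : s + k + t + 4 - (s + 2) = k + t + 2 := by omega
  rw [e5, e6, e7, e8]
  have f1 : (s + k + t + 4)! = (s+k+t+4) * ((s+k+t+3) * (s+k+t+2)!) := by
    rw [show s+k+t+4 = (s+k+t+3)+1 by omega, Nat.factorial_succ,
        show s+k+t+3 = (s+k+t+2)+1 by omega, Nat.factorial_succ]
  have f2 : (s + t + 4)! = (s+t+4) * ((s+t+3) * (s+t+2)!) := by
    rw [show s+t+4 = (s+t+3)+1 by omega, Nat.factorial_succ,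
        show s+t+3 = (s+t+2)+1 by omega, Nat.factorial_succ]
  have f3 : (t + 2)! = (t+2) * (t+1)! := by
    rw [show t+2 = (t+1)+1 by omega, Nat.factorial_succ]
  have f4 : (k + t + 2)! = (k+t+2) * (k+t+1)! := by
    rw [show k+t+2 = (k+t+1)+1 by omega, Nat.factorial_succ]
  rw [f1, f2, f3, f4]
  have n1 : ((s+k+t+2)! : ℝ) ≠ 0 := Nat.cast_ne_zero.2 (Nat.factorial_ne_zero _)
  have n2 : ((s+t+2)! : ℝ) ≠ 0 := Nat.cast_ne_zero.2 (Nat.factorial_ne_zero _)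
  have n3 : ((s+1)! : ℝ) ≠ 0 := Nat.cast_ne_zero.2 (Nat.factorial_ne_zero _)
  have n4 : ((s+2)! : ℝ) ≠ 0 := Nat.cast_ne_zero.2 (Nat.factorial_ne_zero _)
  have n5 : ((k+t+1)! : ℝ) ≠ 0 := Nat.cast_ne_zero.2 (Nat.factorial_ne_zero _)
  have n6 : ((t+1)! : ℝ) ≠ 0 := Nat.cast_ne_zero.2 (Nat.factorial_ne_zero _)
  field_simp
  push_cast
  ring

end

section
variable (b c k : ℕ) (hb : 2 ≤ b) (hk : 1 ≤ k) (hbkc : b + k + 2 ≤ c)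

include hb hk hbkc

lemma value_facts :
    (0:ℝ) < ((c-k-2).choose (b-1) : ℝ) ∧ (0:ℝ) < (c.choose b : ℝ) ∧
    (0:ℝ) < ((c-2).choose (b-1) : ℝ) ∧ (0:ℝ) < ((c-k).choose b : ℝ) := by
  refine ⟨?_, ?_, ?_, ?_⟩ <;>
    exact_mod_cast Nat.choose_pos (by omega)

lemma value1 :
    ((c-b-k : ℕ):ℝ) / ((c-k-2).choose (b-1) : ℝ) * (1 / (c.choose b : ℝ)) /
      (((c-b : ℕ):ℝ) / ((c-2).choose (b-1) : ℝ) * (1 / ((c-k).choose b : ℝ)))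
    = (1 - (k:ℝ)/c) * (1 - (k:ℝ)/((c:ℝ)-1)) := by
  obtain ⟨hC1, hC2, hC3, hC4⟩ := value_facts b c k hb hk hbkc
  have hc0 : (0:ℝ) < c := by exact_mod_cast (by omega : 0 < c)
  have hc1 : (0:ℝ) < (c:ℝ) - 1 := by
    have : (1:ℝ) < c := by exact_mod_cast (by omega : 1 < c)
    linarith
  have hcb : (0:ℝ) < (c:ℝ) - b := by
    have : (b:ℝ) < c := by exact_mod_cast (by omega : b < c)
    linarith
  have hcbk : (0:ℝ) < (c:ℝ) - b - k := by
    have : ((b:ℝ) + k) < c := by exact_mod_cast (by omega : b + k < c)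
    linarith
  have hcast1 : ((c-b-k : ℕ):ℝ) = (c:ℝ) - b - k := by
    rw [Nat.cast_sub (by omega), Nat.cast_sub (by omega)]
  have hcast2 : ((c-b : ℕ):ℝ) = (c:ℝ) - b := by rw [Nat.cast_sub (by omega)]
  rw [hcast1, hcast2]
  have h1 : ((c:ℝ) - b - k) / ((c-k-2).choose (b-1) : ℝ) * (1 / (c.choose b : ℝ)) /
      (((c:ℝ) - b) / ((c-2).choose (b-1) : ℝ) * (1 / ((c-k).choose b : ℝ)))
      = (((c:ℝ) - b - k) * (((c-2).choose (b-1) : ℝ) * ((c-k).choose b : ℝ))) /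
        (((c:ℝ) - b) * (((c-k-2).choose (b-1) : ℝ) * (c.choose b : ℝ))) := by
    field_simp
  have h2 : (1 - (k:ℝ)/c) * (1 - (k:ℝ)/((c:ℝ)-1))
      = (((c:ℝ)-k) * ((c:ℝ)-k-1)) / ((c:ℝ) * ((c:ℝ)-1)) := by
    have e1 : 1 - (k:ℝ)/c = ((c:ℝ)-k)/c := by
      rw [eq_div_iff hc0.ne', sub_mul, div_mul_cancel₀ _ hc0.ne', one_mul]
    have e2 : 1 - (k:ℝ)/((c:ℝ)-1) = ((c:ℝ)-k-1)/((c:ℝ)-1) := by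
      rw [eq_div_iff hc1.ne', sub_mul, div_mul_cancel₀ _ hc1.ne', one_mul]; ring
    rw [e1, e2, div_mul_div_comm]
  rw [h1, h2, div_eq_div_iff (by positivity) (by positivity)]
  linear_combination core_identity b c k hb hk hbkc

lemma value2 :
    1 / ((c-k-2).choose (b-1) : ℝ) * (1 / (c.choose b : ℝ)) /
      (1 / ((c-2).choose (b-1) : ℝ) * (1 / ((c-k).choose b : ℝ)))
    = (1 - (k:ℝ)/c) * (1 - (k:ℝ)/((c:ℝ)-1)) / (1 - (k:ℝ)/((c:ℝ)-(b:ℝ))) := by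
  obtain ⟨hC1, hC2, hC3, hC4⟩ := value_facts b c k hb hk hbkc
  have hc0 : (0:ℝ) < c := by exact_mod_cast (by omega : 0 < c)
  have hc1 : (0:ℝ) < (c:ℝ) - 1 := by
    have : (1:ℝ) < c := by exact_mod_cast (by omega : 1 < c)
    linarith
  have hcb : (0:ℝ) < (c:ℝ) - b := by
    have : (b:ℝ) < c := by exact_mod_cast (by omega : b < c)
    linarith
  have hcbk : (0:ℝ) < (c:ℝ) - b - k := by
    have : ((b:ℝ) + k) < c := by exact_mod_cast (by omega : b + k < c)
    linarith
  have h1 : 1 / ((c-k-2).choose (b-1) : ℝ) * (1 / (c.choose b : ℝ)) /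
      (1 / ((c-2).choose (b-1) : ℝ) * (1 / ((c-k).choose b : ℝ)))
      = (((c-2).choose (b-1) : ℝ) * ((c-k).choose b : ℝ)) /
        (((c-k-2).choose (b-1) : ℝ) * (c.choose b : ℝ)) := by
    field_simp
  have e1 : 1 - (k:ℝ)/c = ((c:ℝ)-k)/c := by
    rw [eq_div_iff hc0.ne', sub_mul, div_mul_cancel₀ _ hc0.ne', one_mul]
  have e2 : 1 - (k:ℝ)/((c:ℝ)-1) = ((c:ℝ)-k-1)/((c:ℝ)-1) := by
    rw [eq_div_iff hc1.ne', sub_mul, div_mul_cancel₀ _ hc1.ne', one_mul]; ring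
  have e3 : 1 - (k:ℝ)/((c:ℝ)-(b:ℝ)) = ((c:ℝ)-b-k)/((c:ℝ)-b) := by
    rw [eq_div_iff hcb.ne', sub_mul, div_mul_cancel₀ _ hcb.ne', one_mul]
  have h2 : (1 - (k:ℝ)/c) * (1 - (k:ℝ)/((c:ℝ)-1)) / (1 - (k:ℝ)/((c:ℝ)-(b:ℝ)))
      = (((c:ℝ)-k) * ((c:ℝ)-k-1) * ((c:ℝ)-b)) / ((c:ℝ) * ((c:ℝ)-1) * ((c:ℝ)-b-k)) := by
    rw [e1, e2, e3, div_mul_div_comm, div_div_div_eq]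
  rw [h1, h2, div_eq_div_iff (by positivity) (by positivity)]
  linear_combination core_identity b c k hb hk hbkc

end

lemma crossRatio_tendsto (b c k j₂ : ℕ) (hb : 2 ≤ b) (hk : 1 ≤ k) (hbkc : b + k + 2 ≤ c)
    (hj₂ : 2 ≤ j₂) (hj₂c : j₂ ≤ c - 1) (K : Finset ℕ)
    (hKs : K ⊆ (Finset.Icc (b+1) c).erase j₂) (hKc : K.card = k) :
    Tendsto (fun ω : ℝ => crossRatio b c k j₂ K (simplexW b ω)) atTop
      (nhds (if j₂ ≤ b then
        (1 - (k : ℝ) / (c : ℝ)) * (1 - (k : ℝ) / ((c : ℝ) - 1))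
      else
        (1 - (k : ℝ) / (c : ℝ)) * (1 - (k : ℝ) / ((c : ℝ) - 1)) /
          (1 - (k : ℝ) / ((c : ℝ) - (b : ℝ))))) := by
  classical
  obtain ⟨hC1, hC2, hC3, hC4⟩ := value_facts b c k hb hk hbkc
  have hKmem : ∀ i ∈ K, b + 1 ≤ i ∧ i ≤ c ∧ i ≠ j₂ := by
    intro i hi
    have h := hKs hi
    rw [Finset.mem_erase, Finset.mem_Icc] at h
    exact ⟨h.2.1, h.2.2, h.1⟩
  have hKsub : K ⊆ Finset.Icc (b+1) c := fun i hi =>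
    Finset.mem_Icc.2 ⟨(hKmem i hi).1, (hKmem i hi).2.1⟩
  have hdisj : ∀ (A O : Finset ℕ), (∀ i ∈ A, i ≤ b) → (∀ i ∈ O, b < i) → Disjoint A O := by
    intro A O hA hO
    rw [Finset.disjoint_left]
    intro x hx hx'
    have := hA x hx; have := hO x hx'; omega
  have hA2b : ∀ i ∈ Finset.Icc 1 b, i ≤ b := fun i hi => (Finset.mem_Icc.1 hi).2
  have hO2b : ∀ i ∈ Finset.Icc (b+1) c, b < i := fun i hi => by
    have := (Finset.mem_Icc.1 hi).1; omega
  have hO1b : ∀ i ∈ Finset.Icc (b+1) c \ K, b < i := fun i hi =>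
    hO2b i (Finset.mem_sdiff.1 hi).1
  have hS2 : Finset.Icc 1 c = Finset.Icc 1 b ∪ Finset.Icc (b+1) c := by
    ext i
    simp only [Finset.mem_Icc, Finset.mem_union]
    omega
  have hS4 : Finset.Icc 1 c \ K = Finset.Icc 1 b ∪ (Finset.Icc (b+1) c \ K) := by
    ext i
    by_cases hiK : i ∈ K
    · have := hKmem i hiK
      simp only [Finset.mem_sdiff, Finset.mem_union, Finset.mem_Icc, hiK, not_true,
        and_false, false_or, or_false, false_or, false_iff, iff_false, not_or, not_and, not_le, and_false, false_and]
      omega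
    · simp only [Finset.mem_sdiff, Finset.mem_union, Finset.mem_Icc, hiK, not_false_iff,
        and_true]
      omega
  have cIccb : (Finset.Icc 1 b).card = b := by rw [Nat.card_Icc]; omega
  have cO1 : (Finset.Icc (b+1) c \ K).card = c - b - k := by
    rw [Finset.card_sdiff_of_subset hKsub, hKc, Nat.card_Icc]; omega
  have cO2 : (Finset.Icc (b+1) c).card = c - b := by rw [Nat.card_Icc]; omega
  have T2 := tendsto_esym_div b b b (c-b) _ _ (hdisj _ _ hA2b hO2b) hA2b hO2b cIccb cO2
    le_rfl
  rw [Nat.sub_self, Nat.choose_zero_right, Nat.cast_one] at T2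
  have T4 := tendsto_esym_div b b b (c-b-k) _ _ (hdisj _ _ hA2b hO1b) hA2b hO1b cIccb cO1
    le_rfl
  rw [Nat.sub_self, Nat.choose_zero_right, Nat.cast_one] at T4
  by_cases hcase : j₂ ≤ b
  · rw [if_pos hcase]
    have hA1b : ∀ i ∈ Finset.Icc 1 b \ ({1, j₂} : Finset ℕ), i ≤ b := fun i hi =>
      hA2b i (Finset.mem_sdiff.1 hi).1
    have hS1 : Finset.Icc 1 c \ insert 1 (insert j₂ K)
        = (Finset.Icc 1 b \ ({1, j₂} : Finset ℕ)) ∪ (Finset.Icc (b+1) c \ K) := by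
      ext i
      by_cases hiK : i ∈ K
      · have := hKmem i hiK
        simp only [Finset.mem_sdiff, Finset.mem_union, Finset.mem_Icc, Finset.mem_insert,
          Finset.mem_singleton, hiK, or_true, not_true, and_false, not_or, or_false, false_or, false_iff, iff_false, not_or, not_and, not_le, and_false, false_and]
        omega
      · simp only [Finset.mem_sdiff, Finset.mem_union, Finset.mem_Icc, Finset.mem_insert,
          Finset.mem_singleton, hiK, or_false, not_or, not_false_iff, and_true, true_and, or_false, false_or, false_iff, iff_false, not_and, not_le, and_false, false_and]
        omega
    have hS3 : Finset.Icc 1 c \ ({1, j₂} : Finset ℕ)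
        = (Finset.Icc 1 b \ ({1, j₂} : Finset ℕ)) ∪ Finset.Icc (b+1) c := by
      ext i
      simp only [Finset.mem_sdiff, Finset.mem_union, Finset.mem_Icc, Finset.mem_insert,
        Finset.mem_singleton, not_or, not_false_iff, and_true, true_and]
      omega
    have hsub12 : ({1, j₂} : Finset ℕ) ⊆ Finset.Icc 1 b := by
      intro x hx
      simp only [Finset.mem_insert, Finset.mem_singleton] at hx
      rcases hx with rfl | rfl <;> (rw [Finset.mem_Icc]; omega)
    have c12 : ({1, j₂} : Finset ℕ).card = 2 := by
      rw [Finset.card_insert_of_notMem (by simp; omega), Finset.card_singleton]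
    have cA1 : (Finset.Icc 1 b \ ({1, j₂} : Finset ℕ)).card = b - 2 := by
      rw [Finset.card_sdiff_of_subset hsub12, c12, Nat.card_Icc]; omega
    have T1 := tendsto_esym_div b (b-1) (b-2) (c-b-k) _ _ (hdisj _ _ hA1b hO1b) hA1b hO1b
      cA1 cO1 (by omega)
    rw [show b - 1 - (b - 2) = 1 by omega, Nat.choose_one_right] at T1
    have T3 := tendsto_esym_div b (b-1) (b-2) (c-b) _ _ (hdisj _ _ hA1b hO2b) hA1b hO2b
      cA1 cO2 (by omega)
    rw [show b - 1 - (b - 2) = 1 by omega, Nat.choose_one_right] at T3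
    have hcbpos : (0:ℝ) < ((c-b : ℕ):ℝ) := by exact_mod_cast (by omega : 0 < c - b)
    have hden : ((c-b : ℕ):ℝ) / ((c-2).choose (b-1) : ℝ)
        * ((1:ℝ) / ((c-k).choose b : ℝ)) ≠ 0 :=
      mul_ne_zero (div_ne_zero hcbpos.ne' hC3.ne') (div_ne_zero one_ne_zero hC4.ne')
    have main := tendsto_ratio_combo
      (C1 := ((c-k-2).choose (b-1) : ℝ)) (C2 := (c.choose b : ℝ)) T1 T2 T3 T4 hden
    rw [value1 b c k hb hk hbkc] at main
    refine main.congr fun ω => ?_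
    simp only [crossRatio]
    rw [hS1, hS3, hS4, hS2]
  · rw [if_neg hcase]
    have hj₂K : j₂ ∉ K := fun h => (hKmem j₂ h).2.2 rfl
    have hA1b : ∀ i ∈ Finset.Icc 1 b \ ({1} : Finset ℕ), i ≤ b := fun i hi =>
      hA2b i (Finset.mem_sdiff.1 hi).1
    have hO1b' : ∀ i ∈ Finset.Icc (b+1) c \ insert j₂ K, b < i := fun i hi =>
      hO2b i (Finset.mem_sdiff.1 hi).1
    have hO3b : ∀ i ∈ Finset.Icc (b+1) c \ ({j₂} : Finset ℕ), b < i := fun i hi =>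
      hO2b i (Finset.mem_sdiff.1 hi).1
    have hS1 : Finset.Icc 1 c \ insert 1 (insert j₂ K)
        = (Finset.Icc 1 b \ ({1} : Finset ℕ)) ∪ (Finset.Icc (b+1) c \ insert j₂ K) := by
      ext i
      by_cases hiK : i ∈ K
      · have := hKmem i hiK
        simp only [Finset.mem_sdiff, Finset.mem_union, Finset.mem_Icc, Finset.mem_insert,
          Finset.mem_singleton, hiK, or_true, not_true, and_false, not_or, or_false, false_or, false_iff, iff_false, not_or, not_and, not_le, and_false, false_and]
        omega
      · simp only [Finset.mem_sdiff, Finset.mem_union, Finset.mem_Icc, Finset.mem_insert,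
          Finset.mem_singleton, hiK, or_false, not_or, not_false_iff, and_true, true_and, or_false, false_or, false_iff, iff_false, not_and, not_le, and_false, false_and]
        omega
    have hS3 : Finset.Icc 1 c \ ({1, j₂} : Finset ℕ)
        = (Finset.Icc 1 b \ ({1} : Finset ℕ)) ∪ (Finset.Icc (b+1) c \ ({j₂} : Finset ℕ)) := by
      ext i
      simp only [Finset.mem_sdiff, Finset.mem_union, Finset.mem_Icc, Finset.mem_insert,
        Finset.mem_singleton, not_or, not_false_iff, and_true, true_and]
      omega
    have hsub1 : ({1} : Finset ℕ) ⊆ Finset.Icc 1 b := by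
      intro x hx
      rw [Finset.mem_singleton] at hx
      subst hx
      rw [Finset.mem_Icc]; omega
    have cA1 : (Finset.Icc 1 b \ ({1} : Finset ℕ)).card = b - 1 := by
      rw [Finset.card_sdiff_of_subset hsub1, Finset.card_singleton, Nat.card_Icc]
      omega
    have hj₂sub : insert j₂ K ⊆ Finset.Icc (b+1) c := by
      intro x hx
      rcases Finset.mem_insert.1 hx with rfl | hx'
      · rw [Finset.mem_Icc]; omega
      · exact hKsub hx'
    have cO1' : (Finset.Icc (b+1) c \ insert j₂ K).card = c - b - k - 1 := by
      rw [Finset.card_sdiff_of_subset hj₂sub, Finset.card_insert_of_notMem hj₂K, hKc, Nat.card_Icc]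
      omega
    have hsubj : ({j₂} : Finset ℕ) ⊆ Finset.Icc (b+1) c := by
      intro x hx
      rw [Finset.mem_singleton] at hx
      subst hx
      rw [Finset.mem_Icc]; omega
    have cO3 : (Finset.Icc (b+1) c \ ({j₂} : Finset ℕ)).card = c - b - 1 := by
      rw [Finset.card_sdiff_of_subset hsubj, Finset.card_singleton, Nat.card_Icc]
      omega
    have T1 := tendsto_esym_div b (b-1) (b-1) (c-b-k-1) _ _ (hdisj _ _ hA1b hO1b') hA1b hO1b'
      cA1 cO1' le_rfl
    rw [Nat.sub_self, Nat.choose_zero_right, Nat.cast_one] at T1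
    have T3 := tendsto_esym_div b (b-1) (b-1) (c-b-1) _ _ (hdisj _ _ hA1b hO3b) hA1b hO3b
      cA1 cO3 le_rfl
    rw [Nat.sub_self, Nat.choose_zero_right, Nat.cast_one] at T3
    have hden : (1:ℝ) / ((c-2).choose (b-1) : ℝ) * ((1:ℝ) / ((c-k).choose b : ℝ)) ≠ 0 :=
      mul_ne_zero (div_ne_zero one_ne_zero hC3.ne') (div_ne_zero one_ne_zero hC4.ne')
    have main := tendsto_ratio_combo
      (C1 := ((c-k-2).choose (b-1) : ℝ)) (C2 := (c.choose b : ℝ)) T1 T2 T3 T4 hden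
    rw [value2 b c k hb hk hbkc] at main
    refine main.congr fun ω => ?_
    simp only [crossRatio]
    rw [hS1, hS3, hS4, hS2]

theorem stmt11 (b c k j₂ : ℕ) (hb : 2 ≤ b) (hk : 1 ≤ k) (hbkc : b + k + 2 ≤ c)
    (hj₂ : 2 ≤ j₂) (hj₂c : j₂ ≤ c - 1) :
    Filter.Tendsto (fun ω : ℝ => avgCrossRatio b c k j₂ (simplexW b ω))
      Filter.atTop
      (nhds (if j₂ ≤ b then
        (1 - (k : ℝ) / (c : ℝ)) * (1 - (k : ℝ) / ((c : ℝ) - 1))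
      else
        (1 - (k : ℝ) / (c : ℝ)) * (1 - (k : ℝ) / ((c : ℝ) - 1)) /
          (1 - (k : ℝ) / ((c : ℝ) - (b : ℝ))))) := by
  classical
  set P := ((Finset.Icc (b + 1) c).erase j₂).powersetCard k with hP
  set L : ℝ := (if j₂ ≤ b then
        (1 - (k : ℝ) / (c : ℝ)) * (1 - (k : ℝ) / ((c : ℝ) - 1))
      else
        (1 - (k : ℝ) / (c : ℝ)) * (1 - (k : ℝ) / ((c : ℝ) - 1)) /
          (1 - (k : ℝ) / ((c : ℝ) - (b : ℝ)))) with hL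
  have key : ∀ K ∈ P, Tendsto (fun ω : ℝ => crossRatio b c k j₂ K (simplexW b ω)) atTop
      (nhds L) := by
    intro K hK
    rw [Finset.mem_powersetCard] at hK
    exact crossRatio_tendsto b c k j₂ hb hk hbkc hj₂ hj₂c K hK.1 hK.2
  have hsum := tendsto_finset_sum P key
  rw [Finset.sum_const, nsmul_eq_mul] at hsum
  have hcard : 0 < P.card := by
    rw [hP, Finset.card_powersetCard]
    refine Nat.choose_pos ?_
    have h1 : (Finset.Icc (b+1) c).card - 1 ≤ ((Finset.Icc (b+1) c).erase j₂).card :=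
      Finset.pred_card_le_card_erase
    rw [Nat.card_Icc] at h1
    omega
  have hNne : ((P.card : ℝ)) ≠ 0 := Nat.cast_ne_zero.2 hcard.ne'
  have hdiv := hsum.div_const ((P.card : ℝ))
  rw [mul_div_cancel_left₀ L hNne] at hdiv
  exact hdiv
end

section
/- For integers 1 ≤ b < c, 1 ≤ k ≤ c−b−1, and 2 ≤ h₂ ≤ c−1 with b ≥ 2, the initial value A(1) = ((b−1)/(h₂−1))·C(c−b, k) + ((h₂−b)/(h₂−1))·C(c−b−1, k) (interpreting the second term as present only when h₂ > b) satisfies A(1) > C(c−b, k)·C(c−k, 2)/C(c, 2). -/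
-- cast of choose 2
lemma choose2_cast (n : ℕ) : ((n.choose 2 : ℕ) : ℚ) = n*(n-1)/2 := by
  induction n with
  | zero => norm_num
  | succ m ih =>
    rw [Nat.choose_succ_succ, Nat.choose_one_right]
    push_cast [ih]
    ring

-- key polynomial inequality, endpoint at H = C-1
lemma keyC (B C : ℚ) (hB : 2 ≤ B) (hC : B+2 ≤ C) :
    0 < B*C*(C-B-1) - C + 2*B^2 := by
  nlinarith [mul_pos (show (0:ℚ) < B by linarith) (show (0:ℚ) < C by linarith),
    mul_nonneg (mul_nonneg (show (0:ℚ) ≤ B by linarith) (show (0:ℚ) ≤ C by linarith))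
      (show (0:ℚ) ≤ C-B-2 by linarith),
    mul_nonneg (show (0:ℚ) ≤ B-2 by linarith) (show (0:ℚ) ≤ C by linarith)]

lemma keyB (B C : ℚ) (hB : 2 ≤ B) (hC : B+2 ≤ C) :
    0 < (B-1)*C^2 + C - B^3 := by
  have h : (B+2)^2 ≤ C^2 := by nlinarith
  nlinarith [mul_le_mul_of_nonneg_left h (show (0:ℚ) ≤ B-1 by linarith)]

lemma key2 (B C H : ℚ) (hB : 2 ≤ B) (hC : B+2 ≤ C) (hH : B+1 ≤ H) (hHc : H ≤ C-1) :
    (H-B)*(C*(C-1)) < (H-1)*((C-B)*(C+B)) := by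
  have g1 := keyB B C hB hC
  have g2 := keyC B C hB hC
  rcases eq_or_lt_of_le hC with h | h
  · have hH' : H = B+1 := by linarith
    subst hH'
    nlinarith
  · nlinarith [mul_nonneg (show (0:ℚ) ≤ C-1-H by linarith) g1.le,
      mul_nonneg (show (0:ℚ) ≤ H-B-1 by linarith) g2.le,
      mul_pos (show (0:ℚ) < C-B-2 by linarith) g1,
      mul_pos (show (0:ℚ) < C-B-2 by linarith) g2]

lemma key (B C K H : ℚ) (hB : 2 ≤ B) (hC : B+2 ≤ C) (hK1 : 1 ≤ K) (hK : K ≤ C-B-1)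
    (hH : B+1 ≤ H) (hHc : H ≤ C-1) :
    (H-B)*(C*(C-1)) < (H-1)*((C-B)*(2*C-K-1)) := by
  have h2 := key2 B C H hB hC hH hHc
  have : (H-1)*((C-B)*(C+B)) ≤ (H-1)*((C-B)*(2*C-K-1)) := by
    nlinarith [mul_nonneg (mul_nonneg (show (0:ℚ) ≤ H-1 by linarith)
      (show (0:ℚ) ≤ C-B by linarith)) (show (0:ℚ) ≤ C-B-K-1 by linarith)]
  linarith

-- case h₂ > b
lemma main2 (B C K H X Y : ℚ) (hX : 0 < X) (hrel : Y*(C-B) = X*(C-B-K))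
    (hB : 2 ≤ B) (hC : B+2 ≤ C) (hK1 : 1 ≤ K) (hK : K ≤ C-B-1)
    (hH : B+1 ≤ H) (hHc : H ≤ C-1) :
    X*((C-K)*((C-K)-1)/2) / (C*(C-1)/2) < (B-1)/(H-1)*X + (H-B)/(H-1)*Y := by
  have hH1 : (0:ℚ) < H - 1 := by linarith
  have hCB : (0:ℚ) < C - B := by linarith
  have hden : (0:ℚ) < C*(C-1)/2 := by nlinarith
  rw [div_lt_iff₀ hden, ← sub_pos]
  have expand : ((B-1)/(H-1)*X + (H-B)/(H-1)*Y) * (C*(C-1)/2) - X*((C-K)*((C-K)-1)/2)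
      = (((B-1)*X + (H-B)*Y)*(C*(C-1)) - X*((C-K)*((C-K)-1))*(H-1)) / (2*(H-1)) := by
    field_simp
  rw [expand]
  apply div_pos _ (by linarith)
  have hkey := key B C K H hB hC hK1 hK hH hHc
  have hpos2 : 0 < X*(K*((H-1)*((C-B)*(2*C-K-1)) - (H-B)*(C*(C-1)))) :=
    mul_pos hX (mul_pos (by linarith) (by linarith))
  have hid : (((B-1)*X + (H-B)*Y)*(C*(C-1)) - X*((C-K)*((C-K)-1))*(H-1))*(C-B)
      = X*(K*((H-1)*((C-B)*(2*C-K-1)) - (H-B)*(C*(C-1)))) := by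
    linear_combination (H-B)*(C*(C-1))*hrel
  nlinarith [hid, hpos2, hCB]

-- case h₂ ≤ b
lemma main1 (B C K H X : ℚ) (hX : 0 < X)
    (hB : 2 ≤ B) (hC : B+2 ≤ C) (hK1 : 1 ≤ K) (hK : K ≤ C-B-1)
    (hH : 2 ≤ H) (hHb : H ≤ B) :
    X*((C-K)*((C-K)-1)/2) / (C*(C-1)/2) < (B-1)/(H-1)*X := by
  have hH1 : (0:ℚ) < H - 1 := by linarith
  have hden : (0:ℚ) < C*(C-1)/2 := by nlinarith
  rw [div_lt_iff₀ hden]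
  have h1 : (1:ℚ) ≤ (B-1)/(H-1) := by
    rw [le_div_iff₀ hH1]; linarith
  have h2 : X*((C-K)*((C-K)-1)/2) < X*(C*(C-1)/2) := by
    nlinarith [mul_pos hX (show (0:ℚ) < K*(2*C-K-1) from
      mul_pos (by linarith) (by linarith))]
  have h3 : X*(C*(C-1)/2) ≤ (B-1)/(H-1)*X*(C*(C-1)/2) := by
    nlinarith [mul_le_mul_of_nonneg_right h1 (mul_pos hX hden).le]
  linarith

theorem stmt12 (b c k h₂ : ℕ) (hb : 2 ≤ b) (hbc : b < c)
    (hk : 1 ≤ k) (hkc : k ≤ c - b - 1)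
    (hh₂ : 2 ≤ h₂) (hh₂c : h₂ ≤ c - 1) :
    (((c - b).choose k * (c - k).choose 2 : ℕ) : ℚ) / ((c.choose 2 : ℕ) : ℚ) <
      (((b - 1) : ℕ) : ℚ) / (((h₂ - 1) : ℕ) : ℚ) * (((c - b).choose k : ℕ) : ℚ) +
        (((h₂ - b) : ℕ) : ℚ) / (((h₂ - 1) : ℕ) : ℚ) * (((c - b - 1).choose k : ℕ) : ℚ) := by
  have hc : b + 2 ≤ c := by omega
  have hX : (0:ℚ) < (((c-b).choose k : ℕ) : ℚ) := by
    exact_mod_cast Nat.choose_pos (show k ≤ c - b by omega)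
  have ecb : ((c - b : ℕ) : ℚ) = (c:ℚ) - b := by rw [Nat.cast_sub (by omega)]
  have eck : ((c - k : ℕ) : ℚ) = (c:ℚ) - k := by rw [Nat.cast_sub (by omega)]
  have eb1 : ((b - 1 : ℕ) : ℚ) = (b:ℚ) - 1 := by
    rw [Nat.cast_sub (by omega)]; norm_num
  have eh1 : ((h₂ - 1 : ℕ) : ℚ) = (h₂:ℚ) - 1 := by
    rw [Nat.cast_sub (by omega)]; norm_num
  have hbq : (2:ℚ) ≤ (b:ℚ) := by exact_mod_cast hb
  have hcq : (b:ℚ) + 2 ≤ (c:ℚ) := by exact_mod_cast hc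
  have hkq : (1:ℚ) ≤ (k:ℚ) := by exact_mod_cast hk
  have hkcq : (k:ℚ) + (b:ℚ) + 1 ≤ (c:ℚ) := by
    exact_mod_cast (show k + b + 1 ≤ c by omega)
  have hh2q : (2:ℚ) ≤ (h₂:ℚ) := by exact_mod_cast hh₂
  have hh2cq : (h₂:ℚ) + 1 ≤ (c:ℚ) := by exact_mod_cast (show h₂ + 1 ≤ c by omega)
  rw [Nat.cast_mul, choose2_cast, choose2_cast, eck, eb1, eh1]
  by_cases hcase : h₂ ≤ b
  · have hz : h₂ - b = 0 := by omega
    rw [hz]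
    have hbq2 : (h₂:ℚ) ≤ (b:ℚ) := by exact_mod_cast hcase
    simp only [Nat.cast_zero, zero_div, zero_mul, add_zero]
    exact main1 (b:ℚ) (c:ℚ) (k:ℚ) (h₂:ℚ) _ hX hbq hcq hkq (by linarith) hh2q hbq2
  · have eh2b : ((h₂ - b : ℕ) : ℚ) = (h₂:ℚ) - b := by rw [Nat.cast_sub (by omega)]
    rw [eh2b]
    have h := Nat.choose_mul_succ_eq (c-b-1) k
    rw [show c-b-1+1 = c-b from by omega] at h
    have ecbk : ((c - b - k : ℕ) : ℚ) = (c:ℚ) - b - k := by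
      rw [Nat.cast_sub (by omega), ecb]
    have hrel : (((c-b-1).choose k : ℕ) : ℚ) * ((c:ℚ)-b)
        = (((c-b).choose k : ℕ) : ℚ) * ((c:ℚ)-b-k) := by
      rw [← ecbk, ← ecb]
      exact_mod_cast h
    have hHq : (b:ℚ) + 1 ≤ (h₂:ℚ) := by exact_mod_cast (show b + 1 ≤ h₂ by omega)
    exact main2 (b:ℚ) (c:ℚ) (k:ℚ) (h₂:ℚ) _ _ hX hrel hbq hcq hkq (by linarith)
      hHq (by linarith)
end

section
/- For integers 1 ≤ b < c and 1 ≤ k ≤ c−b−1, and for b < h ≤ c−1, the quantity ((b−1)·C(c−b,k) + (h−b)·C(c−b−1,k))/(h−1) is strictly decreasing in h, and its value at h = c−1, namely ((b−1)·C(c−b,k) + (c−1−b)·C(c−b−1,k))/(c−2), is still strictly greater than C(c−b,k)·C(c−k,2)/C(c,2), provided b ≥ 2 and c ≥ b + k + 2. -/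
private lemma key_choose (n k : ℕ) (h : k ≤ n) :
    (n + 1) * n.choose k = (n + 1).choose k * (n + 1 - k) := by
  rw [← Nat.choose_succ_right_eq, ← Nat.add_one_mul_choose_eq]

private lemma poly_ineq (x y z : ℕ) :
    ((x + 1) * (y + z + 3) + (y + z + 2) * (z + 2)) * ((x + y + z + 5) * (x + y + z + 4)) =
      (x + z + 4) * (x + z + 3) * (x + y + z + 3) * (y + z + 3) +
      (32 + 28*z + 9*z^2 + z^3 + 51*y + 40*y*z + 11*y*z^2 + y*z^3 + 22*y^2 + 13*y^2*z
        + 2*y^2*z^2 + 3*y^3 + y^3*z + 24*x + 13*x*z + 2*x*z^2 + 34*x*y + 16*x*y*z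
        + 2*x*y*z^2 + 11*x*y^2 + 3*x*y^2*z + x*y^3 + 4*x^2 + x^2*z + 5*x^2*y + x^2*y*z
        + x^2*y^2) := by
  ring

theorem stmt19 (b c k : ℕ) (hb : 2 ≤ b) (hbc : b < c)
    (hk : 1 ≤ k) (hkc : k ≤ c - b - 1) (hc : b + k + 2 ≤ c) :
    (∀ h h' : ℕ, b < h → h < h' → h' ≤ c - 1 →
        ((((b - 1) * (c - b).choose k + (h' - b) * (c - b - 1).choose k : ℕ)) : ℚ) /
            (((h' - 1) : ℕ) : ℚ) <
          ((((b - 1) * (c - b).choose k + (h - b) * (c - b - 1).choose k : ℕ)) : ℚ) /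
            (((h - 1) : ℕ) : ℚ)) ∧
      (((c - b).choose k * (c - k).choose 2 : ℕ) : ℚ) / ((c.choose 2 : ℕ) : ℚ) <
        ((((b - 1) * (c - b).choose k + (c - 1 - b) * (c - b - 1).choose k : ℕ)) : ℚ) /
          (((c - 2) : ℕ) : ℚ) := by
  set A := (c - b).choose k with hA
  set B := (c - b - 1).choose k with hB
  obtain ⟨n, hn⟩ : ∃ n, c - b = n + 1 := ⟨c - b - 1, by omega⟩
  have hn1 : c - b - 1 = n := by omega
  obtain ⟨j, hj⟩ : ∃ j, k = j + 1 := ⟨k - 1, by omega⟩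
  have hjn : j + 1 ≤ n := by omega
  have hkey : (c - b) * B = A * (c - b - k) := by
    have h0 := key_choose n k (by omega)
    rw [hA, hB, hn1, hn]
    exact h0
  have hBA : B < A := by
    rw [hA, hB, hn1, hn, hj, Nat.choose_succ_succ]
    simp only [Nat.succ_eq_add_one]
    have := Nat.choose_pos (show j ≤ n by omega)
    omega
  constructor
  · intro h h' hbh hhh' hh'c
    have hd1 : (0:ℚ) < ((h - 1 : ℕ) : ℚ) := by
      exact_mod_cast Nat.pos_of_ne_zero (by omega)
    have hd2 : (0:ℚ) < ((h' - 1 : ℕ) : ℚ) := by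
      exact_mod_cast Nat.pos_of_ne_zero (by omega)
    rw [div_lt_div_iff₀ hd2 hd1]
    have hnat : ((b - 1) * A + (h' - b) * B) * (h - 1) <
        ((b - 1) * A + (h - b) * B) * (h' - 1) := by
      zify [show 1 ≤ b by omega, show b ≤ h by omega, show b ≤ h' by omega,
        show 1 ≤ h by omega, show 1 ≤ h' by omega]
      have h1 : (B:ℤ) < (A:ℤ) := by exact_mod_cast hBA
      nlinarith [h1, mul_pos (sub_pos.mpr (show (h:ℤ) < h' by exact_mod_cast hhh'))
        (show (0:ℤ) < (b:ℤ) - 1 by push_cast; omega),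
        sub_pos.mpr h1]
    exact_mod_cast hnat
  · have hd1 : (0:ℚ) < ((c - 2 : ℕ) : ℚ) := by
      exact_mod_cast Nat.pos_of_ne_zero (by omega)
    have hd2 : (0:ℚ) < ((c.choose 2 : ℕ) : ℚ) := by
      exact_mod_cast Nat.choose_pos (show 2 ≤ c by omega)
    rw [div_lt_div_iff₀ hd2 hd1]
    have hnat : A * (c - k).choose 2 * (c - 2) <
        ((b - 1) * A + (c - 1 - b) * B) * c.choose 2 := by
      have hch1 : (c - k).choose 2 * 2 = (c - k) * (c - k - 1) := by
        rw [Nat.choose_two_right]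
        apply Nat.div_mul_cancel
        rcases Nat.even_or_odd (c - k) with he | ho
        · exact Dvd.dvd.mul_right he.two_dvd _
        · obtain ⟨m, hm⟩ := ho
          exact Dvd.dvd.mul_left (by omega) _
      have hch2 : c.choose 2 * 2 = c * (c - 1) := by
        rw [Nat.choose_two_right]
        apply Nat.div_mul_cancel
        rcases Nat.even_or_odd c with he | ho
        · exact Dvd.dvd.mul_right he.two_dvd _
        · obtain ⟨m, hm⟩ := ho
          exact Dvd.dvd.mul_left (by omega) _
      have hApos : 0 < A := Nat.choose_pos (by omega)
      rw [← Nat.mul_lt_mul_right (show 0 < 2 * (c - b) by omega)]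
      have lhs_eq : A * (c - k).choose 2 * (c - 2) * (2 * (c - b)) =
          A * ((c - k) * (c - k - 1) * (c - 2) * (c - b)) := by
        rw [← hch1]; ring
      have rhs_eq : ((b - 1) * A + (c - 1 - b) * B) * c.choose 2 * (2 * (c - b)) =
          A * (((b - 1) * (c - b) + (c - 1 - b) * (c - b - k)) * (c * (c - 1))) := by
        have hx : (c - 1 - b) * B * (c - b) = (c - 1 - b) * (A * (c - b - k)) := by
          rw [← hkey]; ring
        calc ((b - 1) * A + (c - 1 - b) * B) * c.choose 2 * (2 * (c - b))
            = ((b - 1) * A * (c - b) + (c - 1 - b) * B * (c - b)) * (c.choose 2 * 2) := by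
              ring
          _ = ((b - 1) * A * (c - b) + (c - 1 - b) * (A * (c - b - k))) * (c * (c - 1)) := by
              rw [hx, hch2]
          _ = A * (((b - 1) * (c - b) + (c - 1 - b) * (c - b - k)) * (c * (c - 1))) := by
              ring
      rw [lhs_eq, rhs_eq]
      apply (mul_lt_mul_iff_right₀ hApos).mpr
      -- core polynomial inequality
      obtain ⟨x, hx⟩ : ∃ x, b = x + 2 := ⟨b - 2, by omega⟩
      obtain ⟨y, hy⟩ : ∃ y, k = y + 1 := ⟨k - 1, by omega⟩
      obtain ⟨z, hz⟩ : ∃ z, c = x + y + z + 5 := ⟨c - (b + k + 2), by omega⟩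
      have e1 : c - k = x + z + 4 := by omega
      have e2 : c - k - 1 = x + z + 3 := by omega
      have e3 : c - 2 = x + y + z + 3 := by omega
      have e4 : c - b = y + z + 3 := by omega
      have e5 : b - 1 = x + 1 := by omega
      have e6 : c - 1 - b = y + z + 2 := by omega
      have e7 : c - b - k = z + 2 := by omega
      have e8 : c - 1 = x + y + z + 4 := by omega
      rw [e2, e7, e6, e1, e4, e3, e5, e8, hz]
      have := poly_ineq x y z
      omega
    calc (((A * (c - k).choose 2 : ℕ)) : ℚ) * ((c - 2 : ℕ) : ℚ)
        = ((A * (c - k).choose 2 * (c - 2) : ℕ) : ℚ) := by push_cast; ring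
      _ < ((((b - 1) * A + (c - 1 - b) * B) * c.choose 2 : ℕ) : ℚ) := by
          exact_mod_cast hnat
      _ = ((((b - 1) * A + (c - 1 - b) * B : ℕ)) : ℚ) * ((c.choose 2 : ℕ) : ℚ) := by
          push_cast; ring
end
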